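/- For every integer d ≥ 1, the graph L_d satisfies c_o(L_d) = d and c_e(L_d) = d(d−1)/2 (= binomial(d,2)). -/

import Mathlib

open SimpleGraph Filter

/-- A subgraph is a cycle: nonempty vertex set, connected, and every vertex of the
subgraph has degree exactly 2 in the subgraph. -/
def SimpleGraph.Subgraph.IsCycleSub {V : Type*} {G : SimpleGraph V} (H : G.Subgraph) : Prop :=
  H.verts.Nonempty ∧ H.coe.Connected ∧ ∀ v ∈ H.verts, (H.neighborSet v).ncard = 2

/-- The number of odd cycles of `G`. -/
noncomputable def cOdd {V : Type*} (G : SimpleGraph V) : ℕ :=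
  {H : G.Subgraph | H.IsCycleSub ∧ Odd H.verts.ncard}.ncard

/-- The number of even cycles of `G`. -/
noncomputable def cEven {V : Type*} (G : SimpleGraph V) : ℕ :=
  {H : G.Subgraph | H.IsCycleSub ∧ Even H.verts.ncard}.ncard

/-- The number of odd cycles of `G` passing through the edge `xy`. -/
noncomputable def cOddE {V : Type*} (G : SimpleGraph V) (x y : V) : ℕ :=
  {H : G.Subgraph | H.IsCycleSub ∧ Odd H.verts.ncard ∧ H.Adj x y}.ncard

/-- The number of even cycles of `G` passing through the edge `xy`. -/
noncomputable def cEvenE {V : Type*} (G : SimpleGraph V) (x y : V) : ℕ :=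
  {H : G.Subgraph | H.IsCycleSub ∧ Even H.verts.ncard ∧ H.Adj x y}.ncard

/-- The graph `L_d`: a path `v_0 v_1 … v_(2d)` together with the chords `v_i v_(2d-i)`
for `0 ≤ i ≤ d-1`. -/
def LGraph (d : ℕ) : SimpleGraph (Fin (2 * d + 1)) :=
  SimpleGraph.fromRel (fun p q =>
    (q.val = p.val + 1) ∨ (p.val + q.val = 2 * d ∧ p.val < d))

/-! ### Auxiliary development -/

lemma lgraph_adj {d : ℕ} {x y : Fin (2 * d + 1)} :
    (LGraph d).Adj x y ↔ x.val ≠ y.val ∧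
      (y.val = x.val + 1 ∨ x.val = y.val + 1 ∨
        (x.val + y.val = 2 * d ∧ x.val < d) ∨ (x.val + y.val = 2 * d ∧ y.val < d)) := by
  rw [LGraph, fromRel_adj]
  constructor
  · rintro ⟨h1, h2⟩
    exact ⟨fun h => h1 (Fin.val_injective h), by omega⟩
  · rintro ⟨h1, h2⟩
    exact ⟨fun h => h1 (congrArg Fin.val h), by omega⟩

/-- The numeric edge pattern for the cycle `CC d i j`. -/
def pat (d i j a b : ℕ) : Prop :=
  (b = a + 1 ∧ ((i ≤ a ∧ b ≤ j) ∨ (2 * d - j ≤ a ∧ b ≤ 2 * d - i)))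
  ∨ (a = i ∧ b = 2 * d - i ∧ i < j ∧ j ≤ d)
  ∨ (a = j ∧ b = 2 * d - j ∧ i < j ∧ j < d)

/-- The cycle subgraph of `LGraph d` through chords `i` and `j` (for `j = d` this is
the odd cycle through the single chord `i`). -/
def CC (d i j : ℕ) : (LGraph d).Subgraph where
  verts := {x | (i ≤ x.val ∧ x.val ≤ j) ∨ (2 * d - j ≤ x.val ∧ x.val ≤ 2 * d - i)}
  Adj x y := (LGraph d).Adj x y ∧ (pat d i j x.val y.val ∨ pat d i j y.val x.val)
  adj_sub h := h.1
  edge_vert {x y} h := by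
    have h2 := h.2
    simp only [pat] at h2
    simp only [Set.mem_setOf_eq]
    omega
  symm := ⟨fun x y h => ⟨h.1.symm, h.2.symm⟩⟩

lemma mem_CC_verts {d i j : ℕ} {x : Fin (2 * d + 1)} :
    x ∈ (CC d i j).verts ↔
      ((i ≤ x.val ∧ x.val ≤ j) ∨ (2 * d - j ≤ x.val ∧ x.val ≤ 2 * d - i)) := Iff.rfl

lemma CC_adj {d i j : ℕ} (hij : i < j) (hjd : j ≤ d) {x y : Fin (2 * d + 1)} :
    (CC d i j).Adj x y ↔ (pat d i j x.val y.val ∨ pat d i j y.val x.val) := by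
  constructor
  · exact And.right
  · intro h
    refine ⟨?_, h⟩
    rw [lgraph_adj]
    have hx := x.isLt
    have hy := y.isLt
    simp only [pat] at h
    omega

lemma nbhd_pair {d i j : ℕ} (v : Fin (2 * d + 1)) (p q : ℕ)
    (hp : p < 2 * d + 1) (hq : q < 2 * d + 1) (hpq : p ≠ q)
    (hiff : ∀ w : Fin (2 * d + 1), (CC d i j).Adj v w ↔ (w.val = p ∨ w.val = q)) :
    ((CC d i j).neighborSet v).ncard = 2 := by
  have hset : (CC d i j).neighborSet v = {⟨p, hp⟩, ⟨q, hq⟩} := by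
    ext w
    rw [SimpleGraph.Subgraph.mem_neighborSet, hiff w]
    simp [Fin.ext_iff]
  rw [hset]
  exact Set.ncard_pair (by simp [Fin.ext_iff]; omega)

set_option maxHeartbeats 2000000 in
lemma CC_deg {d i j : ℕ} (hij : i < j) (hjd : j ≤ d) :
    ∀ v ∈ (CC d i j).verts, ((CC d i j).neighborSet v).ncard = 2 := by
  intro v hv
  have hv' : ((i ≤ v.val ∧ v.val ≤ j) ∨ (2 * d - j ≤ v.val ∧ v.val ≤ 2 * d - i)) := hv
  have hvlt := v.isLt
  have hcases : v.val = i ∨ ((i < v.val ∧ v.val < j) ∨ (2 * d - j < v.val ∧ v.val < 2 * d - i))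
      ∨ (v.val = j ∧ j < d) ∨ (v.val = d ∧ j = d) ∨ (v.val = 2 * d - j ∧ j < d)
      ∨ v.val = 2 * d - i := by omega
  rcases hcases with hc | hc | hc | hc | hc | hc
  · exact nbhd_pair v (i + 1) (2 * d - i) (by omega) (by omega) (by omega)
      (fun w => by rw [CC_adj hij hjd]; simp only [pat]; omega)
  · exact nbhd_pair v (v.val - 1) (v.val + 1) (by omega) (by omega) (by omega)
      (fun w => by rw [CC_adj hij hjd]; simp only [pat]; omega)
  · exact nbhd_pair v (j - 1) (2 * d - j) (by omega) (by omega) (by omega)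
      (fun w => by rw [CC_adj hij hjd]; simp only [pat]; omega)
  · exact nbhd_pair v (d - 1) (d + 1) (by omega) (by omega) (by omega)
      (fun w => by rw [CC_adj hij hjd]; simp only [pat]; omega)
  · exact nbhd_pair v j (2 * d - j + 1) (by omega) (by omega) (by omega)
      (fun w => by rw [CC_adj hij hjd]; simp only [pat]; omega)
  · exact nbhd_pair v (2 * d - i - 1) i (by omega) (by omega) (by omega)
      (fun w => by rw [CC_adj hij hjd]; simp only [pat]; omega)
lemma CC_conn {d i j : ℕ} (hij : i < j) (hjd : j ≤ d) : (CC d i j).coe.Connected := by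
  have hiv : (⟨i, by omega⟩ : Fin (2 * d + 1)) ∈ (CC d i j).verts := by
    rw [mem_CC_verts]; simp only [Fin.val_mk]; omega
  set x0 : (CC d i j).verts := ⟨⟨i, by omega⟩, hiv⟩ with hx0
  have key : ∀ k (hlt : k < 2 * d + 1) (hm : (⟨k, hlt⟩ : Fin (2 * d + 1)) ∈ (CC d i j).verts),
      (CC d i j).coe.Reachable x0 ⟨⟨k, hlt⟩, hm⟩ := by
    intro k
    induction k using Nat.strong_induction_on with
    | _ k ih =>
      intro hlt hm
      have hk : (i ≤ k ∧ k ≤ j) ∨ (2 * d - j ≤ k ∧ k ≤ 2 * d - i) := hm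
      have hcases : k = i ∨ (i < k ∧ k ≤ j) ∨ (j < d ∧ k = 2 * d - j)
          ∨ (2 * d - j < k ∧ k ≤ 2 * d - i) := by omega
      rcases hcases with hc | hc | hc | hc
      · subst hc; exact Reachable.refl _
      · have hadj : (CC d i j).Adj ⟨k - 1, by omega⟩ ⟨k, hlt⟩ := by
          rw [CC_adj hij hjd]
          simp only [pat, Fin.val_mk, true_and, and_true, le_refl]
          omega
        exact ((ih (k - 1) (by omega) (by omega) hadj.fst_mem).trans hadj.coe.reachable)
      · have hadj : (CC d i j).Adj ⟨j, by omega⟩ ⟨k, hlt⟩ := by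
          rw [CC_adj hij hjd]
          simp only [pat, Fin.val_mk, true_and, and_true, le_refl]
          omega
        exact ((ih j (by omega) (by omega) hadj.fst_mem).trans hadj.coe.reachable)
      · have hadj : (CC d i j).Adj ⟨k - 1, by omega⟩ ⟨k, hlt⟩ := by
          rw [CC_adj hij hjd]
          simp only [pat, Fin.val_mk, true_and, and_true, le_refl]
          omega
        exact ((ih (k - 1) (by omega) (by omega) hadj.fst_mem).trans hadj.coe.reachable)
  rw [connected_iff]
  refine ⟨?_, ⟨x0⟩⟩
  rintro ⟨⟨av, alt⟩, am⟩ ⟨⟨bv, blt⟩, bm⟩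
  exact (key av alt am).symm.trans (key bv blt bm)

lemma CC_isCycleSub {d i j : ℕ} (hij : i < j) (hjd : j ≤ d) : (CC d i j).IsCycleSub :=
  ⟨⟨⟨i, by omega⟩, by rw [mem_CC_verts]; simp only [Fin.val_mk]; omega⟩,
    CC_conn hij hjd, CC_deg hij hjd⟩

lemma CC_ncard1 {d i : ℕ} (hid : i < d) : (CC d i d).verts.ncard = 2 * (d - i) + 1 := by
  have hv : (CC d i d).verts =
      ↑(Finset.Icc (⟨i, by omega⟩ : Fin (2 * d + 1)) ⟨2 * d - i, by omega⟩) := by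
    ext x
    rw [mem_CC_verts]
    simp only [Finset.coe_Icc, Set.mem_Icc, Fin.le_def, Fin.val_mk]
    omega
  rw [hv, Set.ncard_coe_finset, Fin.card_Icc]
  simp only [Fin.val_mk]
  omega

lemma CC_ncard2 {d i j : ℕ} (hij : i < j) (hjd : j < d) :
    (CC d i j).verts.ncard = 2 * (j - i) + 2 := by
  have hv : (CC d i j).verts =
      ↑((Finset.Icc (⟨i, by omega⟩ : Fin (2 * d + 1)) ⟨j, by omega⟩) ∪
        (Finset.Icc (⟨2 * d - j, by omega⟩ : Fin (2 * d + 1)) ⟨2 * d - i, by omega⟩)) := by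
    ext x
    rw [mem_CC_verts]
    simp only [Finset.coe_union, Set.mem_union, Finset.coe_Icc, Set.mem_Icc, Fin.le_def,
      Fin.val_mk]
  rw [hv, Set.ncard_coe_finset, Finset.card_union_of_disjoint, Fin.card_Icc, Fin.card_Icc]
  · simp only [Fin.val_mk]; omega
  · rw [Finset.disjoint_left]
    intro a ha hb
    rw [Finset.mem_Icc, Fin.le_def, Fin.le_def] at ha hb
    simp only [Fin.val_mk] at ha hb
    omega
section Classify

variable {d : ℕ} {H : (LGraph d).Subgraph}

lemma nbr_eq (hdeg : ∀ v ∈ H.verts, (H.neighborSet v).ncard = 2)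
    {v a b : Fin (2 * d + 1)} (ha : H.Adj v a) (hb : H.Adj v b) (hab : a ≠ b)
    {w : Fin (2 * d + 1)} (hw : H.Adj v w) : w = a ∨ w = b := by
  have hsub : ({a, b} : Set (Fin (2 * d + 1))) ⊆ H.neighborSet v := by
    rintro x (rfl | rfl)
    · exact ha
    · exact hb
  have h2 := hdeg v ha.fst_mem
  have heq : ({a, b} : Set (Fin (2 * d + 1))) = H.neighborSet v :=
    Set.eq_of_subset_of_ncard_le hsub (by rw [h2, Set.ncard_pair hab]) (Set.toFinite _)
  have : w ∈ ({a, b} : Set (Fin (2 * d + 1))) := heq ▸ hw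
  simpa using this

lemma nbrs_exist (hdeg : ∀ v ∈ H.verts, (H.neighborSet v).ncard = 2)
    {v : Fin (2 * d + 1)} (hv : v ∈ H.verts) :
    ∃ a b, a ≠ b ∧ H.Adj v a ∧ H.Adj v b := by
  obtain ⟨a, b, hab, h⟩ := Set.ncard_eq_two.mp (hdeg v hv)
  refine ⟨a, b, hab, ?_, ?_⟩
  · rw [← SimpleGraph.Subgraph.mem_neighborSet, h]; exact Set.mem_insert _ _
  · rw [← SimpleGraph.Subgraph.mem_neighborSet, h]; exact Set.mem_insert_of_mem _ rfl

lemma other_nbr (hdeg : ∀ v ∈ H.verts, (H.neighborSet v).ncard = 2)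
    {v a : Fin (2 * d + 1)} (ha : H.Adj v a) :
    ∃ b, H.Adj v b ∧ b ≠ a ∧ ∀ w, H.Adj v w → w = b ∨ w = a := by
  obtain ⟨p, q, hpq, hp, hq⟩ := nbrs_exist hdeg ha.fst_mem
  rcases nbr_eq hdeg hp hq hpq ha with rfl | rfl
  · exact ⟨q, hq, hpq.symm, fun w hw => (nbr_eq hdeg hp hq hpq hw).symm⟩
  · exact ⟨p, hp, hpq, fun w hw => nbr_eq hdeg hp hq hpq hw⟩

/-- Numeric facts from an `H`-adjacency. -/
lemma adj_val {x y : Fin (2 * d + 1)} (h : H.Adj x y) :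
    x.val ≠ y.val ∧ (y.val = x.val + 1 ∨ x.val = y.val + 1 ∨
      (x.val + y.val = 2 * d ∧ x.val < d) ∨ (x.val + y.val = 2 * d ∧ y.val < d)) :=
  lgraph_adj.mp (H.adj_sub h)

/-- Propagation of path edges upward from the minimum. -/
lemma prop_up (hdeg : ∀ v ∈ H.verts, (H.neighborSet v).ncard = 2)
    {x0 : Fin (2 * d + 1)}
    (hmin : ∀ y ∈ H.verts, x0.val ≤ y.val)
    {p : Fin (2 * d + 1)} (hp : H.Adj x0 p) (hpv : p.val = x0.val + 1)
    (J : ℕ) (hJ2 : J + x0.val + 1 ≤ 2 * d)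
    (hnc : ∀ u v : Fin (2 * d + 1), H.Adj u v → u.val + v.val = 2 * d → u.val < d →
      x0.val < u.val → (u.val ≤ J ∨ 2 * d - J ≤ u.val) → False) :
    ∀ k, x0.val ≤ k → k ≤ J →
      ∃ x y : Fin (2 * d + 1), H.Adj x y ∧ x.val = k ∧ y.val = k + 1 := by
  intro k hk
  induction k, hk using Nat.le_induction with
  | base => intro _; exact ⟨x0, p, hp, rfl, by omega⟩
  | succ k hk ih =>
    intro hk1
    obtain ⟨x, y, hxy, hxv, hyv⟩ := ih (by omega)
    obtain ⟨b, hb, hbne, _⟩ := other_nbr hdeg hxy.symm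
    have hgb := adj_val hb
    have hbm : x0.val ≤ b.val := hmin b hb.snd_mem
    have hbx : b.val ≠ x.val := fun h => hbne (Fin.val_injective h)
    rcases (show b.val = k + 2 ∨ (y.val + b.val = 2 * d ∧ (y.val < d ∨ b.val < d)) by omega)
      with h1 | h2
    · exact ⟨y, b, hb, by omega, by omega⟩
    · exfalso
      rcases Nat.lt_or_ge y.val d with hyd | hyd
      · exact hnc y b hb (by omega) hyd (by omega) (by omega)
      · exact hnc b y hb.symm (by omega) (by omega) (by omega) (by omega)

/-- Propagation of path edges downward from the maximum. -/
lemma prop_down (hdeg : ∀ v ∈ H.verts, (H.neighborSet v).ncard = 2)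
    {x1 : Fin (2 * d + 1)}
    (hmax : ∀ y ∈ H.verts, y.val ≤ x1.val)
    {p1 : Fin (2 * d + 1)} (hp1 : H.Adj x1 p1) (hp1v : p1.val + 1 = x1.val)
    (K : ℕ)
    (hnc : ∀ u v : Fin (2 * d + 1), H.Adj u v → u.val + v.val = 2 * d → u.val < d →
      (K < u.val ∨ (K < v.val ∧ v.val < x1.val)) → False) :
    ∀ k, K ≤ k → k + 1 ≤ x1.val →
      ∃ x y : Fin (2 * d + 1), H.Adj x y ∧ x.val = k ∧ y.val = k + 1 := by
  have main : ∀ t k, K ≤ k → k + 1 ≤ x1.val → x1.val - (k + 1) = t →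
      ∃ x y : Fin (2 * d + 1), H.Adj x y ∧ x.val = k ∧ y.val = k + 1 := by
    intro t
    induction t with
    | zero =>
      intro k hKk hk1 ht
      exact ⟨p1, x1, hp1.symm, by omega, by omega⟩
    | succ t iht =>
      intro k hKk hk1 ht
      obtain ⟨x, y, hxy, hxv, hyv⟩ := iht (k + 1) (by omega) (by omega) (by omega)
      obtain ⟨b, hb, hbne, _⟩ := other_nbr hdeg hxy
      have hgb := adj_val hb
      have hby : b.val ≤ x1.val := hmax b hb.snd_mem
      have hbx : b.val ≠ y.val := fun h => hbne (Fin.val_injective h)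
      rcases (show b.val = k ∨ (x.val + b.val = 2 * d ∧ (x.val < d ∨ b.val < d)) by omega)
        with h1 | h2
      · exact ⟨b, x, hb.symm, by omega, by omega⟩
      · exfalso
        rcases Nat.lt_or_ge x.val d with hxd | hxd
        · exact hnc x b hb (by omega) hxd (by omega)
        · exact hnc b x hb.symm (by omega) (by omega) (by omega)

  intro k hKk hk1
  exact main (x1.val - (k + 1)) k hKk hk1 rfl

/-- Closure under adjacency plus connectivity forces containment. -/
lemma verts_subset_of_closed (hconn : H.coe.Connected)
    {x0 : Fin (2 * d + 1)} (hx0 : x0 ∈ H.verts)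
    {W : Set (Fin (2 * d + 1))} (hW0 : x0 ∈ W)
    (hcl : ∀ x y, x ∈ W → H.Adj x y → y ∈ W) :
    ∀ v ∈ H.verts, v ∈ W := by
  intro v hv
  obtain ⟨w⟩ := hconn.preconnected ⟨x0, hx0⟩ ⟨v, hv⟩
  have main : ∀ (a b : H.verts) (_ : H.coe.Walk a b), a.1 ∈ W → b.1 ∈ W := by
    intro a b q
    induction q with
    | nil => exact id
    | cons h q ihq =>
      intro haW
      exact ihq (hcl _ _ haW ((SimpleGraph.Subgraph.coe_adj _ _ _).mp h))
  exact main _ _ w hW0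

end Classify
section Classify2

variable {d : ℕ} {H : (LGraph d).Subgraph}

lemma edge_use {a b : ℕ}
    (h : ∃ x y : Fin (2 * d + 1), H.Adj x y ∧ x.val = a ∧ y.val = b)
    (u w : Fin (2 * d + 1)) (hu : u.val = a) (hw : w.val = b) : H.Adj u w := by
  obtain ⟨x', y', hxy, hx, hy⟩ := h
  have h1 : x' = u := Fin.val_injective (by omega)
  have h2 : y' = w := Fin.val_injective (by omega)
  subst h1; subst h2; exact hxy

lemma fwd_case1 (hdeg : ∀ v ∈ H.verts, (H.neighborSet v).ncard = 2)
    {m j : ℕ} (hmj : m < j) (hjd : j ≤ d)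
    (E : ∀ k, m ≤ k → k + 1 ≤ j →
      ∃ x y : Fin (2 * d + 1), H.Adj x y ∧ x.val = k ∧ y.val = k + 1)
    (Ec1 : ∃ x y : Fin (2 * d + 1), H.Adj x y ∧ x.val = m ∧ y.val = 2 * d - m)
    {x y : Fin (2 * d + 1)} (hxy : H.Adj x y) (hc : x.val = m) :
    pat d m j x.val y.val ∨ pat d m j y.val x.val := by
  have hxlt := x.isLt
  have harg1 : m + 1 ≤ j := by omega
  obtain ⟨u1, w1, hA1, hu1, hw1⟩ := E m le_rfl harg1
  have he1 : u1 = x := Fin.val_injective (by omega)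
  rw [he1] at hA1
  obtain ⟨u2, w2, hA2, hu2, hw2⟩ := Ec1
  have he2 : u2 = x := Fin.val_injective (by omega)
  rw [he2] at hA2
  have hne : w1 ≠ w2 := fun h => by rw [h] at hw1; omega
  rcases nbr_eq hdeg hA1 hA2 hne hxy with rfl | rfl
  · exact Or.inl (Or.inl ⟨by omega, by omega⟩)
  · exact Or.inl (Or.inr (Or.inl ⟨by omega, by omega, hmj, hjd⟩))

lemma fwd_case2 (hdeg : ∀ v ∈ H.verts, (H.neighborSet v).ncard = 2)
    {m j : ℕ} (hmj : m < j) (hjd : j ≤ d)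
    (EE : ∀ k, ((m ≤ k ∧ k + 1 ≤ j) ∨ (2 * d - j ≤ k ∧ k + 1 ≤ 2 * d - m)) →
      ∃ x y : Fin (2 * d + 1), H.Adj x y ∧ x.val = k ∧ y.val = k + 1)
    {x y : Fin (2 * d + 1)} (hxy : H.Adj x y)
    (hc : (m < x.val ∧ x.val < j) ∨ (2 * d - j < x.val ∧ x.val < 2 * d - m)
          ∨ (x.val = d ∧ j = d)) :
    pat d m j x.val y.val ∨ pat d m j y.val x.val := by
  have hxlt := x.isLt
  obtain ⟨u1, w1, hA1, hu1, hw1⟩ := EE (x.val - 1) (by omega)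
  have he1 : w1 = x := Fin.val_injective (by omega)
  rw [he1] at hA1
  obtain ⟨u2, w2, hA2, hu2, hw2⟩ := EE x.val (by omega)
  have he2 : u2 = x := Fin.val_injective (by omega)
  rw [he2] at hA2
  have hne : u1 ≠ w2 := fun h => by rw [h] at hu1; omega
  clear hw1 hu2 he1 he2
  rcases nbr_eq hdeg hA1.symm hA2 hne hxy with rfl | rfl
  · exact Or.inr (Or.inl ⟨by omega, by omega⟩)
  · exact Or.inl (Or.inl ⟨by omega, by omega⟩)

lemma fwd_case3 (hdeg : ∀ v ∈ H.verts, (H.neighborSet v).ncard = 2)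
    {m j : ℕ} (hmj : m < j) (hjd : j ≤ d)
    (E : ∀ k, m ≤ k → k + 1 ≤ j →
      ∃ x y : Fin (2 * d + 1), H.Adj x y ∧ x.val = k ∧ y.val = k + 1)
    (Ec2 : j < d → ∃ x y : Fin (2 * d + 1), H.Adj x y ∧ x.val = j ∧ y.val = 2 * d - j)
    {x y : Fin (2 * d + 1)} (hxy : H.Adj x y) (hc : x.val = j ∧ j < d) :
    pat d m j x.val y.val ∨ pat d m j y.val x.val := by
  have hxlt := x.isLt
  obtain ⟨u1, w1, hA1, hu1, hw1⟩ := E (j - 1) (by omega) (by omega)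
  have he1 : w1 = x := Fin.val_injective (by omega)
  rw [he1] at hA1
  obtain ⟨u2, w2, hA2, hu2, hw2⟩ := Ec2 hc.2
  have he2 : u2 = x := Fin.val_injective (by omega)
  rw [he2] at hA2
  have hne : u1 ≠ w2 := fun h => by rw [h] at hu1; omega
  clear hw1 hu2 he1 he2
  rcases nbr_eq hdeg hA1.symm hA2 hne hxy with rfl | rfl
  · exact Or.inr (Or.inl ⟨by omega, by omega⟩)
  · exact Or.inl (Or.inr (Or.inr ⟨by omega, by omega, hmj, hc.2⟩))

lemma fwd_case4 (hdeg : ∀ v ∈ H.verts, (H.neighborSet v).ncard = 2)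
    {m j : ℕ} (hmj : m < j) (hjd : j ≤ d)
    (EE : ∀ k, ((m ≤ k ∧ k + 1 ≤ j) ∨ (2 * d - j ≤ k ∧ k + 1 ≤ 2 * d - m)) →
      ∃ x y : Fin (2 * d + 1), H.Adj x y ∧ x.val = k ∧ y.val = k + 1)
    (Ec2 : j < d → ∃ x y : Fin (2 * d + 1), H.Adj x y ∧ x.val = j ∧ y.val = 2 * d - j)
    {x y : Fin (2 * d + 1)} (hxy : H.Adj x y) (hc : x.val = 2 * d - j ∧ j < d) :
    pat d m j x.val y.val ∨ pat d m j y.val x.val := by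
  have hxlt := x.isLt
  obtain ⟨u1, w1, hA1, hu1, hw1⟩ := Ec2 hc.2
  have he1 : w1 = x := Fin.val_injective (by omega)
  rw [he1] at hA1
  obtain ⟨u2, w2, hA2, hu2, hw2⟩ := EE x.val (by omega)
  have he2 : u2 = x := Fin.val_injective (by omega)
  rw [he2] at hA2
  have hne : u1 ≠ w2 := fun h => by rw [h] at hu1; omega
  clear hw1 hu2 he1 he2
  rcases nbr_eq hdeg hA1.symm hA2 hne hxy with rfl | rfl
  · exact Or.inr (Or.inr (Or.inr ⟨by omega, by omega, hmj, hc.2⟩))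
  · exact Or.inl (Or.inl ⟨by omega, by omega⟩)

lemma fwd_case5 (hdeg : ∀ v ∈ H.verts, (H.neighborSet v).ncard = 2)
    {m j : ℕ} (hmj : m < j) (hjd : j ≤ d)
    (EE : ∀ k, ((m ≤ k ∧ k + 1 ≤ j) ∨ (2 * d - j ≤ k ∧ k + 1 ≤ 2 * d - m)) →
      ∃ x y : Fin (2 * d + 1), H.Adj x y ∧ x.val = k ∧ y.val = k + 1)
    (Ec1 : ∃ x y : Fin (2 * d + 1), H.Adj x y ∧ x.val = m ∧ y.val = 2 * d - m)
    {x y : Fin (2 * d + 1)} (hxy : H.Adj x y) (hc : x.val = 2 * d - m) :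
    pat d m j x.val y.val ∨ pat d m j y.val x.val := by
  have hxlt := x.isLt
  obtain ⟨u1, w1, hA1, hu1, hw1⟩ := EE (x.val - 1) (by omega)
  have he1 : w1 = x := Fin.val_injective (by omega)
  rw [he1] at hA1
  obtain ⟨u2, w2, hA2, hu2, hw2⟩ := Ec1
  have he2 : w2 = x := Fin.val_injective (by omega)
  rw [he2] at hA2
  have hne : u1 ≠ u2 := fun h => by rw [h] at hu1; omega
  clear hw1 hw2 he1 he2
  rcases nbr_eq hdeg hA1.symm hA2.symm hne hxy with rfl | rfl
  · exact Or.inr (Or.inl ⟨by omega, by omega⟩)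
  · exact Or.inr (Or.inr (Or.inl ⟨by omega, by omega, hmj, hjd⟩))

lemma hfwd_lemma (hdeg : ∀ v ∈ H.verts, (H.neighborSet v).ncard = 2)
    {m j : ℕ} (hmj : m < j) (hjd : j ≤ d)
    (E : ∀ k, m ≤ k → k + 1 ≤ j →
      ∃ x y : Fin (2 * d + 1), H.Adj x y ∧ x.val = k ∧ y.val = k + 1)
    (E' : ∀ k, 2 * d - j ≤ k → k + 1 ≤ 2 * d - m →
      ∃ x y : Fin (2 * d + 1), H.Adj x y ∧ x.val = k ∧ y.val = k + 1)
    (Ec1 : ∃ x y : Fin (2 * d + 1), H.Adj x y ∧ x.val = m ∧ y.val = 2 * d - m)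
    (Ec2 : j < d → ∃ x y : Fin (2 * d + 1), H.Adj x y ∧ x.val = j ∧ y.val = 2 * d - j) :
    ∀ x y : Fin (2 * d + 1), x ∈ (CC d m j).verts → H.Adj x y → (CC d m j).Adj x y := by
  have EE : ∀ k, ((m ≤ k ∧ k + 1 ≤ j) ∨ (2 * d - j ≤ k ∧ k + 1 ≤ 2 * d - m)) →
      ∃ x y : Fin (2 * d + 1), H.Adj x y ∧ x.val = k ∧ y.val = k + 1 := by
    rintro k (h | h)
    · exact E k h.1 h.2
    · exact E' k h.1 h.2
  intro x y hxW hxy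
  have hk : (m ≤ x.val ∧ x.val ≤ j) ∨ (2 * d - j ≤ x.val ∧ x.val ≤ 2 * d - m) := hxW
  have hxlt := x.isLt
  rw [CC_adj hmj hjd]
  have hcases : x.val = m ∨
      ((m < x.val ∧ x.val < j) ∨ (2 * d - j < x.val ∧ x.val < 2 * d - m)
        ∨ (x.val = d ∧ j = d))
      ∨ (x.val = j ∧ j < d) ∨ (x.val = 2 * d - j ∧ j < d) ∨ x.val = 2 * d - m := by
    omega
  rcases hcases with hc | hc | hc | hc | hc
  · exact fwd_case1 hdeg hmj hjd E Ec1 hxy hc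
  · exact fwd_case2 hdeg hmj hjd EE hxy hc
  · exact fwd_case3 hdeg hmj hjd E Ec2 hxy hc
  · exact fwd_case4 hdeg hmj hjd EE Ec2 hxy hc
  · exact fwd_case5 hdeg hmj hjd EE Ec1 hxy hc

lemma assemble (hdeg : ∀ v ∈ H.verts, (H.neighborSet v).ncard = 2)
    (hconn : H.coe.Connected) {m j : ℕ} (hmj : m < j) (hjd : j ≤ d)
    (hmin : ∀ y ∈ H.verts, m ≤ y.val) (hmax : ∀ y ∈ H.verts, y.val ≤ 2 * d - m)
    (E : ∀ k, m ≤ k → k + 1 ≤ j →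
      ∃ x y : Fin (2 * d + 1), H.Adj x y ∧ x.val = k ∧ y.val = k + 1)
    (E' : ∀ k, 2 * d - j ≤ k → k + 1 ≤ 2 * d - m →
      ∃ x y : Fin (2 * d + 1), H.Adj x y ∧ x.val = k ∧ y.val = k + 1)
    (Ec1 : ∃ x y : Fin (2 * d + 1), H.Adj x y ∧ x.val = m ∧ y.val = 2 * d - m)
    (Ec2 : j < d → ∃ x y : Fin (2 * d + 1), H.Adj x y ∧ x.val = j ∧ y.val = 2 * d - j) :
    H = CC d m j := by
  have hmd : m < d := by omega
  have EE : ∀ k, ((m ≤ k ∧ k + 1 ≤ j) ∨ (2 * d - j ≤ k ∧ k + 1 ≤ 2 * d - m)) →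
      ∃ x y : Fin (2 * d + 1), H.Adj x y ∧ x.val = k ∧ y.val = k + 1 := by
    rintro k (h | h)
    · exact E k h.1 h.2
    · exact E' k h.1 h.2
  have hfwd := hfwd_lemma hdeg hmj hjd E E' Ec1 Ec2
  -- H.verts ⊆ CC verts
  obtain ⟨e1, e2, he, he1, he2⟩ := Ec1
  have hsub : ∀ v ∈ H.verts, v ∈ (CC d m j).verts := by
    refine verts_subset_of_closed hconn he.fst_mem ?_ ?_
    · show (m ≤ e1.val ∧ e1.val ≤ j) ∨ _
      left; omega
    · intro x y hxW hxy
      exact ((hfwd x y hxW hxy).symm).fst_mem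
  -- CC verts ⊆ H.verts
  have hsup : ∀ v : Fin (2 * d + 1), v ∈ (CC d m j).verts → v ∈ H.verts := by
    intro v hvW
    have hk : (m ≤ v.val ∧ v.val ≤ j) ∨ (2 * d - j ≤ v.val ∧ v.val ≤ 2 * d - m) := hvW
    have hvlt := v.isLt
    have hcases : (m ≤ v.val ∧ v.val + 1 ≤ j) ∨ v.val = j
        ∨ (2 * d - j ≤ v.val ∧ v.val + 1 ≤ 2 * d - m) ∨ v.val = 2 * d - m := by omega
    clear hk
    rcases hcases with hc | hc | hc | hc
    · obtain ⟨x', y', hxy, hx, _⟩ := E v.val hc.1 hc.2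
      have hq : x' = v := Fin.val_injective (by omega)
      exact hq ▸ hxy.fst_mem
    · have harg1 : m ≤ j - 1 := by omega
      have harg2 : (j - 1) + 1 ≤ j := by omega
      obtain ⟨x', y', hxy, _, hy⟩ := E (j - 1) harg1 harg2
      have hq : y' = v := Fin.val_injective (by omega)
      exact hq ▸ hxy.snd_mem
    · obtain ⟨x', y', hxy, hx, _⟩ := E' v.val hc.1 hc.2
      have hq : x' = v := Fin.val_injective (by omega)
      exact hq ▸ hxy.fst_mem
    · have hq : e2 = v := Fin.val_injective (by omega)
      exact hq ▸ he.snd_mem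
  -- conclusion
  apply SimpleGraph.Subgraph.ext
  · exact Set.Subset.antisymm hsub hsup
  · funext x y
    apply propext
    constructor
    · intro hxy
      exact hfwd x y (hsub x hxy.fst_mem) hxy
    · intro hxy
      have hp := (CC_adj hmj hjd).mp hxy
      have hxlt := x.isLt
      have hylt := y.isLt
      simp only [pat] at hp
      rcases hp with (h | h | h) | (h | h | h)
      · exact edge_use (EE x.val (by omega)) x y rfl (by omega)
      · exact edge_use (⟨e1, e2, he, he1, he2⟩ :
          ∃ x y : Fin (2 * d + 1), H.Adj x y ∧ x.val = m ∧ y.val = 2 * d - m)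
          x y (by omega) (by omega)
      · exact edge_use (Ec2 h.2.2.2) x y (by omega) (by omega)
      · exact (edge_use (EE y.val (by omega)) y x rfl (by omega)).symm
      · exact (edge_use (⟨e1, e2, he, he1, he2⟩ :
          ∃ x y : Fin (2 * d + 1), H.Adj x y ∧ x.val = m ∧ y.val = 2 * d - m)
          y x (by omega) (by omega)).symm
      · exact (edge_use (Ec2 h.2.2.2) y x (by omega) (by omega)).symm

end Classify2
theorem classify {d : ℕ} {H : (LGraph d).Subgraph} (hcyc : H.IsCycleSub) :
    ∃ i j, i < j ∧ j ≤ d ∧ H = CC d i j := by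
  obtain ⟨hne, hconn, hdeg⟩ := hcyc
  -- minimum vertex
  obtain ⟨x0, hx0, hmin⟩ := Set.exists_min_image H.verts (fun x => x.val) (Set.toFinite _) hne
  obtain ⟨a, b, hab, ha, hb⟩ := nbrs_exist hdeg hx0
  have hga := adj_val ha
  have hgb := adj_val hb
  have hma : x0.val ≤ a.val := hmin a ha.snd_mem
  have hmb : x0.val ≤ b.val := hmin b hb.snd_mem
  have habv : a.val ≠ b.val := fun h => hab (Fin.val_injective h)
  have halt := a.isLt
  have hblt := b.isLt
  have hx0lt := x0.isLt
  have hmd : x0.val < d := by omega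
  obtain ⟨p, q, hp, hq, hpv, hqv⟩ :
      ∃ p q, H.Adj x0 p ∧ H.Adj x0 q ∧ p.val = x0.val + 1 ∧ q.val = 2 * d - x0.val := by
    rcases (show (a.val = x0.val + 1 ∧ b.val = 2 * d - x0.val) ∨
        (b.val = x0.val + 1 ∧ a.val = 2 * d - x0.val) by omega) with h | h
    · exact ⟨a, b, ha, hb, h.1, h.2⟩
    · exact ⟨b, a, hb, ha, h.1, h.2⟩
  clear hga hgb hma hmb habv hab ha hb halt hblt
  -- maximum vertex
  obtain ⟨x1, hx1, hmax⟩ := Set.exists_max_image H.verts (fun x => x.val) (Set.toFinite _) hne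
  have hqM : q.val ≤ x1.val := hmax q hq.snd_mem
  obtain ⟨a1, b1, hab1, ha1, hb1⟩ := nbrs_exist hdeg hx1
  have hga1 := adj_val ha1
  have hgb1 := adj_val hb1
  have hMa : a1.val ≤ x1.val := hmax a1 ha1.snd_mem
  have hMb : b1.val ≤ x1.val := hmax b1 hb1.snd_mem
  have hma1 : x0.val ≤ a1.val := hmin a1 ha1.snd_mem
  have hmb1 : x0.val ≤ b1.val := hmin b1 hb1.snd_mem
  have habv1 : a1.val ≠ b1.val := fun h => hab1 (Fin.val_injective h)
  have hx1lt := x1.isLt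
  have hM : x1.val = 2 * d - x0.val := by omega
  obtain ⟨p1, hp1, hp1v⟩ : ∃ p1, H.Adj x1 p1 ∧ p1.val + 1 = x1.val := by
    rcases (show a1.val + 1 = x1.val ∨ b1.val + 1 = x1.val by omega) with h | h
    · exact ⟨a1, ha1, h⟩
    · exact ⟨b1, hb1, h⟩
  clear hga1 hgb1 hMa hMb hma1 hmb1 habv1 hab1 ha1 hb1 hqM
  have hmax2 : ∀ y ∈ H.verts, y.val ≤ 2 * d - x0.val := fun y hy => hM ▸ hmax y hy
  -- case split on existence of a second chord
  by_cases hex : ∃ u v : Fin (2 * d + 1), H.Adj u v ∧ u.val + v.val = 2 * d ∧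
      x0.val < u.val ∧ u.val < d
  · -- a second chord exists
    set S : Set ℕ := {k | ∃ u v : Fin (2 * d + 1), H.Adj u v ∧ u.val + v.val = 2 * d ∧
        u.val = k ∧ x0.val < k ∧ k < d} with hS
    have hSne : S.Nonempty := by
      obtain ⟨u, v, h1, h2, h3, h4⟩ := hex
      exact ⟨u.val, u, v, h1, h2, rfl, h3, h4⟩
    set j := sInf S with hj
    obtain ⟨cu, cv, hc1, hc2, hc3, hmj, hjd'⟩ := Nat.sInf_mem hSne
    have hjmin : ∀ k, k < j → k ∉ S := fun k hk => Nat.notMem_of_lt_sInf hk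
    refine ⟨x0.val, j, hmj, le_of_lt hjd', ?_⟩
    have hup := prop_up hdeg hmin hp hpv (j - 1) (by omega)
      (fun u v huv hsum hud hgt hcond => by
        have : u.val ∈ S := ⟨u, v, huv, hsum, rfl, hgt, hud⟩
        have := Nat.sInf_le this
        omega)
    have hdown := prop_down hdeg hmax hp1 hp1v (2 * d - j)
      (fun u v huv hsum hud hcond => by
        have hvm : x0.val ≤ v.val := hmin v huv.snd_mem
        have : u.val ∈ S := ⟨u, v, huv, hsum, rfl, by omega, hud⟩
        have := Nat.sInf_le this
        omega)
    refine assemble hdeg hconn hmj (le_of_lt hjd') hmin hmax2 ?_ ?_ ?_ ?_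
    · intro k hk hk1
      exact hup k hk (by omega)
    · intro k hk hk1
      exact hdown k hk (by omega)
    · exact ⟨x0, q, hq, rfl, hqv⟩
    · intro _
      exact ⟨cu, cv, hc1, hc3, by omega⟩
  · -- no second chord : the odd cycle
    refine ⟨x0.val, d, hmd, le_refl d, ?_⟩
    have hnone : ∀ u v : Fin (2 * d + 1), H.Adj u v → u.val + v.val = 2 * d →
        u.val < d → x0.val < u.val → False := by
      intro u v h1 h2 h3 h4
      exact hex ⟨u, v, h1, h2, h4, h3⟩
    have hup := prop_up hdeg hmin hp hpv (2 * d - x0.val - 1) (by omega)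
      (fun u v huv hsum hud hgt _ => hnone u v huv hsum hud hgt)
    refine assemble hdeg hconn hmd (le_refl d) hmin hmax2 ?_ ?_ ?_ ?_
    · intro k hk hk1
      exact hup k hk (by omega)
    · intro k hk hk1
      exact hup k (by omega) (by omega)
    · exact ⟨x0, q, hq, rfl, hqv⟩
    · intro h
      exact absurd h (lt_irrefl d)
lemma CC_inj {d i j i' j' : ℕ} (hij : i < j) (hjd : j ≤ d) (hij' : i' < j') (hjd' : j' ≤ d)
    (h : CC d i j = CC d i' j') : i = i' ∧ j = j' := by
  have hv := congrArg SimpleGraph.Subgraph.verts h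
  have m1 : (i' ≤ i ∧ i ≤ j') ∨ (2 * d - j' ≤ i ∧ i ≤ 2 * d - i') := by
    have hmem : (⟨i, by omega⟩ : Fin (2 * d + 1)) ∈ (CC d i' j').verts := by
      rw [← hv]
      exact Or.inl ⟨le_rfl, show i ≤ j by omega⟩
    exact hmem
  have m2 : (i' ≤ j ∧ j ≤ j') ∨ (2 * d - j' ≤ j ∧ j ≤ 2 * d - i') := by
    have hmem : (⟨j, by omega⟩ : Fin (2 * d + 1)) ∈ (CC d i' j').verts := by
      rw [← hv]
      exact Or.inl ⟨show i ≤ j by omega, le_rfl⟩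
    exact hmem
  have m3 : (i ≤ i' ∧ i' ≤ j) ∨ (2 * d - j ≤ i' ∧ i' ≤ 2 * d - i) := by
    have hmem : (⟨i', by omega⟩ : Fin (2 * d + 1)) ∈ (CC d i j).verts := by
      rw [hv]
      exact Or.inl ⟨le_rfl, show i' ≤ j' by omega⟩
    exact hmem
  have m4 : (i ≤ j' ∧ j' ≤ j) ∨ (2 * d - j ≤ j' ∧ j' ≤ 2 * d - i) := by
    have hmem : (⟨j', by omega⟩ : Fin (2 * d + 1)) ∈ (CC d i j).verts := by
      rw [hv]
      exact Or.inl ⟨show i' ≤ j' by omega, le_rfl⟩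
    exact hmem
  omega

lemma odd_eq (d : ℕ) :
    {K : (LGraph d).Subgraph | K.IsCycleSub ∧ Odd K.verts.ncard}
      = (fun i => CC d i d) '' ↑(Finset.range d) := by
  ext K
  simp only [Set.mem_setOf_eq, Set.mem_image, Finset.coe_range, Set.mem_Iio]
  constructor
  · rintro ⟨hc, hodd⟩
    obtain ⟨i, j, hij, hjd, rfl⟩ := classify hc
    rcases lt_or_eq_of_le hjd with h | h
    · rw [CC_ncard2 hij h] at hodd
      have := Nat.odd_iff.mp hodd
      omega
    · subst h
      exact ⟨i, by omega, rfl⟩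
  · rintro ⟨i, hi, rfl⟩
    refine ⟨CC_isCycleSub hi (le_refl d), ?_⟩
    rw [CC_ncard1 hi]
    exact Nat.odd_iff.mpr (by omega)

lemma even_eq (d : ℕ) :
    {K : (LGraph d).Subgraph | K.IsCycleSub ∧ Even K.verts.ncard}
      = (fun p : ℕ × ℕ => CC d p.1 p.2) ''
        ↑((Finset.range d ×ˢ Finset.range d).filter fun p : ℕ × ℕ => p.1 < p.2) := by
  ext K
  simp only [Set.mem_setOf_eq, Set.mem_image, Finset.mem_coe, Finset.mem_filter,
    Finset.mem_product, Finset.mem_range]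
  constructor
  · rintro ⟨hc, heven⟩
    obtain ⟨i, j, hij, hjd, rfl⟩ := classify hc
    rcases lt_or_eq_of_le hjd with h | h
    · exact ⟨(i, j), ⟨⟨by omega, h⟩, hij⟩, rfl⟩
    · subst h
      rw [CC_ncard1 (by omega)] at heven
      have := Nat.even_iff.mp heven
      omega
  · rintro ⟨⟨pi, pj⟩, ⟨⟨h1, h2⟩, h3⟩, rfl⟩
    refine ⟨CC_isCycleSub h3 (le_of_lt h2), ?_⟩
    rw [CC_ncard2 h3 h2]
    exact Nat.even_iff.mpr (by omega)

lemma card_pairs (d : ℕ) :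
    ((Finset.range d ×ˢ Finset.range d).filter fun p : ℕ × ℕ => p.1 < p.2).card
      = d * (d - 1) / 2 := by
  have h1 : ((Finset.range d ×ˢ Finset.range d).filter fun p : ℕ × ℕ => p.1 < p.2).card
      = ((Finset.range d).sigma fun j => Finset.range j).card := by
    apply Finset.card_bij (fun p _ => (⟨p.2, p.1⟩ : Σ _ : ℕ, ℕ))
    · rintro ⟨a, b⟩ hp
      simp only [Finset.mem_filter, Finset.mem_product, Finset.mem_range] at hp
      simp only [Finset.mem_sigma, Finset.mem_range]
      omega
    · rintro ⟨a, b⟩ h1 ⟨a', b'⟩ h2 h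
      have hb : b = b' := congrArg Sigma.fst h
      have ha : a = a' := congrArg (fun s : (Σ _ : ℕ, ℕ) => s.snd) h
      rw [Prod.mk.injEq]
      exact ⟨ha, hb⟩
    · rintro ⟨k, l⟩ hb
      simp only [Finset.mem_sigma, Finset.mem_range] at hb
      refine ⟨(l, k), ?_, rfl⟩
      simp only [Finset.mem_filter, Finset.mem_product, Finset.mem_range]
      omega
  rw [h1, Finset.card_sigma]
  simp only [Finset.card_range]
  exact Finset.sum_range_id d

theorem cOdd_cEven_LGraph (d : ℕ) (hd : 1 ≤ d) :
    cOdd (LGraph d) = d ∧ cEven (LGraph d) = d * (d - 1) / 2 := by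
  constructor
  · rw [cOdd, odd_eq d, Set.ncard_image_of_injOn, Set.ncard_coe_finset, Finset.card_range]
    intro i hi i' hi' h
    simp only [Finset.coe_range, Set.mem_Iio] at hi hi'
    exact (CC_inj hi (le_refl d) hi' (le_refl d) h).1
  · rw [cEven, even_eq d, Set.ncard_image_of_injOn, Set.ncard_coe_finset, card_pairs]
    rintro ⟨a, b⟩ hp ⟨a', b'⟩ hp' h
    simp only [Finset.mem_coe, Finset.mem_filter, Finset.mem_product, Finset.mem_range] at hp hp'
    have := CC_inj hp.2 (le_of_lt hp.1.2) hp'.2 (le_of_lt hp'.1.2) h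
    rw [Prod.mk.injEq]
    exact this
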